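/- Let p ≥ 5 be prime and let a, b, t be positive integers. Then |C(a·p^t − 1, b·p^t − 1) − C(a − 1, b − 1)|_p ≤ p^{−3} · |b|_p² · |a − b|_p, where C(n,m) denotes the binomial coefficient and |·|_p is the p-adic absolute value on ℚ. -/

import Mathlib

open Finset

set_option linter.unusedSectionVars false

namespace Stmt12

variable {p : ℕ} [hp : Fact p.Prime]

def T (p N : ℕ) : Finset ℕ := (range N).filter (fun k => ¬ p ∣ k)

noncomputable def sig (p N j : ℕ) : ℚ :=
  ∑ A ∈ (T p N).powersetCard j, ∏ k ∈ A, (k : ℚ)⁻¹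

def psi (p M w' k : ℕ) : ℕ := p ^ M * (k / p ^ M) + (k * w') % p ^ M

lemma norm_nat_eq {n : ℕ} (hn : n ≠ 0) :
    padicNorm p (n : ℚ) = (p : ℚ) ^ (-(padicValNat p n : ℤ)) := by
  rw [padicNorm.eq_zpow_of_nonzero (by exact_mod_cast hn), padicValRat.of_nat]

lemma norm_nat_unit {k : ℕ} (h : ¬ p ∣ k) : padicNorm p (k : ℚ) = 1 :=
  (padicNorm.nat_eq_one_iff k).2 h

lemma norm_inv_unit {k : ℕ} (h : ¬ p ∣ k) : padicNorm p ((k : ℚ)⁻¹) = 1 := by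
  rw [← one_div, padicNorm.div, padicNorm.one, norm_nat_unit h, div_one]

lemma norm_int_modeq {m : ℕ} {x y : ℤ} (h : (p:ℤ)^m ∣ x - y) :
    padicNorm p ((x : ℚ) - (y : ℚ)) ≤ (p:ℚ) ^ (-(m:ℤ)) := by
  have := padicNorm.dvd_iff_norm_le (p := p) (n := m) (z := x - y)
  push_cast at this ⊢
  exact this.1 h

lemma norm_nat_dvd_le {m n : ℕ} (h : p ^ m ∣ n) :
    padicNorm p (n : ℚ) ≤ (p:ℚ) ^ (-(m:ℤ)) := by
  have : (p:ℤ)^m ∣ (n : ℤ) - 0 := by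
    rw [sub_zero]; exact_mod_cast h
  simpa using norm_int_modeq this

lemma mem_T {N k : ℕ} : k ∈ T p N ↔ k < N ∧ ¬ p ∣ k := by simp [T]

lemma eps_nonneg (M : ℕ) : (0:ℚ) ≤ (p:ℚ) ^ (-(M:ℤ)) := by positivity

lemma eps_le_one (M : ℕ) : (p:ℚ) ^ (-(M:ℤ)) ≤ 1 := by
  have h1 : (1:ℚ) ≤ (p:ℚ) := by exact_mod_cast hp.out.one_lt.le
  calc (p:ℚ) ^ (-(M:ℤ)) ≤ (p:ℚ) ^ (0:ℤ) := zpow_le_zpow_right₀ h1 (by omega)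
    _ = 1 := zpow_zero _

lemma prod_norm_le_one {A : Finset ℕ} {g : ℕ → ℚ} (h : ∀ k ∈ A, padicNorm p (g k) ≤ 1) :
    padicNorm p (∏ k ∈ A, g k) ≤ 1 := by
  classical
  induction A using Finset.induction_on with
  | empty => simp [padicNorm.one]
  | @insert a s ha ih =>
    rw [Finset.prod_insert ha, padicNorm.mul]
    exact mul_le_one₀ (h a (mem_insert_self a s)) (padicNorm.nonneg _)
      (ih fun k hk => h k (mem_insert_of_mem hk))

lemma prod_cong {A : Finset ℕ} {f g : ℕ → ℚ} {ε : ℚ} (hε0 : 0 ≤ ε) (hε1 : ε ≤ 1)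
    (hf : ∀ k ∈ A, padicNorm p (f k) ≤ 1) (hg : ∀ k ∈ A, padicNorm p (g k) ≤ 1)
    (hfg : ∀ k ∈ A, padicNorm p (f k - g k) ≤ ε) :
    padicNorm p (∏ k ∈ A, f k - ∏ k ∈ A, g k) ≤ ε := by
  classical
  induction A using Finset.induction_on with
  | empty => simpa using hε0
  | @insert a s ha ih =>
    rw [Finset.prod_insert ha, Finset.prod_insert ha]
    have key : f a * ∏ k ∈ s, f k - g a * ∏ k ∈ s, g k
        = f a * (∏ k ∈ s, f k - ∏ k ∈ s, g k) + (f a - g a) * ∏ k ∈ s, g k := by ring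
    rw [key]
    refine le_trans padicNorm.nonarchimedean (max_le ?_ ?_)
    · rw [padicNorm.mul]
      calc padicNorm p (f a) * padicNorm p (∏ k ∈ s, f k - ∏ k ∈ s, g k)
          ≤ 1 * ε := by
            apply mul_le_mul (hf a (mem_insert_self a s))
              (ih (fun k hk => hf k (mem_insert_of_mem hk))
                  (fun k hk => hg k (mem_insert_of_mem hk))
                  (fun k hk => hfg k (mem_insert_of_mem hk)))
              (padicNorm.nonneg _) zero_le_one
        _ = ε := one_mul ε
    · rw [padicNorm.mul]
      calc padicNorm p (f a - g a) * padicNorm p (∏ k ∈ s, g k)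
          ≤ ε * 1 := mul_le_mul (hfg a (mem_insert_self a s))
              (prod_norm_le_one fun k hk => hg k (mem_insert_of_mem hk))
              (padicNorm.nonneg _) hε0
        _ = ε := mul_one ε

lemma esymm_reindex {N j : ℕ} {f : ℕ → ℚ} (φ φ' : ℕ → ℕ)
    (hφ : ∀ k ∈ T p N, φ k ∈ T p N) (hφ' : ∀ k ∈ T p N, φ' k ∈ T p N)
    (h1 : ∀ k ∈ T p N, φ' (φ k) = k) (h2 : ∀ k ∈ T p N, φ (φ' k) = k) :
    ∑ A ∈ (T p N).powersetCard j, ∏ k ∈ A, f (φ k)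
      = ∑ A ∈ (T p N).powersetCard j, ∏ k ∈ A, f k := by
  classical
  refine Finset.sum_nbij' (fun A => A.image φ) (fun A => A.image φ') ?_ ?_ ?_ ?_ ?_
  · intro A hA
    rw [mem_powersetCard] at hA ⊢
    constructor
    · intro x hx
      obtain ⟨k, hk, rfl⟩ := Finset.mem_image.1 hx
      exact hφ k (hA.1 hk)
    · rw [Finset.card_image_of_injOn, hA.2]
      intro x hx y hy hxy
      have := congrArg φ' hxy
      rwa [h1 x (hA.1 hx), h1 y (hA.1 hy)] at this
  · intro A hA
    rw [mem_powersetCard] at hA ⊢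
    constructor
    · intro x hx
      obtain ⟨k, hk, rfl⟩ := Finset.mem_image.1 hx
      exact hφ' k (hA.1 hk)
    · rw [Finset.card_image_of_injOn, hA.2]
      intro x hx y hy hxy
      have := congrArg φ hxy
      rwa [h2 x (hA.1 hx), h2 y (hA.1 hy)] at this
  · intro A hA
    rw [mem_powersetCard] at hA
    show image φ' (image φ A) = A
    rw [Finset.image_image]
    calc image (φ' ∘ φ) A = image id A := Finset.image_congr (fun x hx => h1 x (hA.1 hx))
      _ = A := Finset.image_id
  · intro A hA
    rw [mem_powersetCard] at hA
    show image φ (image φ' A) = A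
    rw [Finset.image_image]
    calc image (φ ∘ φ') A = image id A := Finset.image_congr (fun x hx => h2 x (hA.1 hx))
      _ = A := Finset.image_id
  · intro A hA
    rw [mem_powersetCard] at hA
    rw [Finset.prod_image]
    intro x hx y hy hxy
    have := congrArg φ' hxy
    rwa [h1 x (hA.1 hx), h1 y (hA.1 hy)] at this


section M

variable {N M : ℕ}

lemma psi_mem (hM1 : 1 ≤ M) (hMN : p ^ M ∣ N) {w' k : ℕ} (hw' : ¬ p ∣ w') (hk : k ∈ T p N) :
    psi p M w' k ∈ T p N := by
  obtain ⟨hkN, hpk⟩ := mem_T.1 hk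
  have hpM : 0 < p ^ M := Nat.pow_pos hp.out.pos
  obtain ⟨m, hm⟩ := hMN
  rw [mem_T]
  constructor
  · have hq : k / p ^ M + 1 ≤ m := by
      have : k / p ^ M < m := Nat.div_lt_of_lt_mul (by rw [← hm]; exact hkN)
      omega
    have h2 : p ^ M * (k / p ^ M + 1) ≤ p ^ M * m := Nat.mul_le_mul_left _ hq
    have h3 : (k * w') % p ^ M < p ^ M := Nat.mod_lt _ hpM
    unfold psi
    rw [hm]
    rw [Nat.mul_add, Nat.mul_one] at h2
    omega
  · intro hdvd
    unfold psi at hdvd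
    have h1 : p ∣ p ^ M := dvd_pow_self p (by omega)
    have h2 : p ∣ (k * w') % p ^ M :=
      (Nat.dvd_add_right (h1.mul_right _)).mp hdvd
    have h3 : p ∣ k * w' := by
      have h4 : p ∣ p ^ M * (k * w' / p ^ M) := h1.mul_right _
      rw [← Nat.div_add_mod (k * w') (p ^ M)]
      exact dvd_add h4 h2
    rcases (Nat.Prime.dvd_mul hp.out).1 h3 with h | h
    · exact hpk h
    · exact hw' h

lemma psi_psi {u v k : ℕ} (huv : u * v ≡ 1 [MOD p ^ M]) :
    psi p M u (psi p M v k) = k := by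
  have hpM : 0 < p ^ M := Nat.pow_pos hp.out.pos
  unfold psi
  have h1 : (p ^ M * (k / p ^ M) + k * v % p ^ M) / p ^ M = k / p ^ M := by
    rw [Nat.mul_add_div hpM]
    simp [Nat.div_eq_of_lt (Nat.mod_lt _ hpM)]
  have h2 : ((p ^ M * (k / p ^ M) + k * v % p ^ M) * u) % p ^ M = k % p ^ M := by
    have he : (p ^ M * (k / p ^ M) + k * v % p ^ M) * u
        = p ^ M * (k / p ^ M * u) + (k * v % p ^ M) * u := by ring
    rw [he, Nat.mul_add_mod]
    have h5 : (k * v % p ^ M) * u % p ^ M = (k * v * u) % p ^ M := by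
      conv_rhs => rw [← Nat.mod_mul_mod]
    rw [h5]
    have h6 : k * v * u ≡ k * 1 [MOD p ^ M] := by
      calc k * v * u = k * (u * v) := by ring
        _ ≡ k * 1 [MOD p ^ M] := Nat.ModEq.mul_left k huv
    simpa [Nat.ModEq, Nat.mul_one] using h6
  rw [h1, h2, Nat.div_add_mod]

lemma psi_modeq (w' k : ℕ) : psi p M w' k ≡ k * w' [MOD p ^ M] := by
  unfold psi
  calc p ^ M * (k / p ^ M) + k * w' % p ^ M
      ≡ 0 + k * w' % p ^ M [MOD p ^ M] :=
        Nat.ModEq.add_right _ ((Nat.modEq_zero_iff_dvd).2 ⟨_, rfl⟩)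
    _ = k * w' % p ^ M := by rw [Nat.zero_add]
    _ ≡ k * w' [MOD p ^ M] := Nat.mod_modEq _ _

lemma key_cong (hM1 : 1 ≤ M) (hMN : p ^ M ∣ N) {w w' k : ℕ}
    (hww' : w * w' ≡ 1 [MOD p ^ M]) (hw' : ¬ p ∣ w') (hk : k ∈ T p N) :
    padicNorm p ((w : ℚ) * (k : ℚ)⁻¹ - ((psi p M w' k : ℕ) : ℚ)⁻¹) ≤ (p:ℚ) ^ (-(M:ℤ)) := by
  set m := psi p M w' k with hmdef
  have hmT : m ∈ T p N := psi_mem hM1 hMN hw' hk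
  have hpk : ¬ p ∣ k := (mem_T.1 hk).2
  have hpm : ¬ p ∣ m := (mem_T.1 hmT).2
  have hk0 : (k:ℚ) ≠ 0 := by exact_mod_cast fun h => hpk (by exact_mod_cast h ▸ dvd_zero p)
  have hm0 : (m:ℚ) ≠ 0 := by exact_mod_cast fun h => hpm (by exact_mod_cast h ▸ dvd_zero p)
  have heq : (w : ℚ) * (k : ℚ)⁻¹ - (m : ℚ)⁻¹ = (((w * m : ℕ):ℚ) - (k:ℚ)) / ((k * m : ℕ):ℚ) := by
    push_cast
    field_simp
  have hcong : w * m ≡ k [MOD p ^ M] := by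
    calc w * m ≡ w * (k * w') [MOD p ^ M] := Nat.ModEq.mul_left w (psi_modeq w' k)
      _ = k * (w * w') := by ring
      _ ≡ k * 1 [MOD p ^ M] := Nat.ModEq.mul_left k hww'
      _ = k := by rw [Nat.mul_one]
  have hdvd : (p:ℤ)^M ∣ ((w*m : ℕ) : ℤ) - (k : ℤ) := by
    have h2 := Nat.ModEq.dvd hcong
    push_cast at h2
    exact dvd_sub_comm.mp h2
  have hnum : padicNorm p (((w * m : ℕ):ℚ) - (k:ℚ)) ≤ (p:ℚ) ^ (-(M:ℤ)) := by
    have := norm_int_modeq (p := p) hdvd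
    push_cast at this ⊢
    exact this
  have hden : padicNorm p ((k * m : ℕ):ℚ) = 1 := by
    apply norm_nat_unit
    intro h
    rcases (Nat.Prime.dvd_mul hp.out).1 h with h | h
    · exact hpk h
    · exact hpm h
  rw [heq, padicNorm.div, hden, div_one]
  exact hnum


lemma exists_inv (hM1 : 1 ≤ M) {w : ℕ} (hw : ¬ p ∣ w) :
    ∃ w', w * w' ≡ 1 [MOD p ^ M] ∧ ¬ p ∣ w' := by
  have h1 : 1 < p ^ M := Nat.one_lt_pow (by omega) hp.out.one_lt
  have hcop : w.Coprime (p ^ M) :=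
    Nat.Coprime.pow_right M (((Nat.Prime.coprime_iff_not_dvd hp.out).2 hw).symm)
  obtain ⟨w', -, hw'⟩ := Nat.exists_mul_mod_eq_one_of_coprime hcop h1
  refine ⟨w', ?_, ?_⟩
  · show w * w' % (p ^ M) = 1 % (p ^ M)
    rw [hw', Nat.mod_eq_of_lt h1]
  · intro hpw'
    have h2 : p ∣ w * w' := Dvd.dvd.mul_left hpw' w
    have h3 : p ∣ p ^ M * (w * w' / p ^ M) := (dvd_pow_self p (by omega : M ≠ 0)).mul_right _
    have h4 := Nat.div_add_mod (w * w') (p ^ M)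
    rw [hw'] at h4
    have h5 : p ∣ 1 := by
      have : (1 : ℕ) = w * w' - p ^ M * (w * w' / p ^ M) := by omega
      rw [this]
      exact Nat.dvd_sub h2 h3
    exact absurd (Nat.le_of_dvd one_pos h5) (by have := hp.out.two_le; omega)

lemma sig_rot (hM1 : 1 ≤ M) (hMN : p ^ M ∣ N) {w : ℕ} (hw : ¬ p ∣ w) (j : ℕ) :
    padicNorm p (sig p N j * ((w:ℚ)^j - 1)) ≤ (p:ℚ) ^ (-(M:ℤ)) := by
  obtain ⟨w', hww', hpw'⟩ := exists_inv hM1 hw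
  have hw'w : w' * w ≡ 1 [MOD p ^ M] := by rwa [Nat.mul_comm] at hww'
  have e1 : sig p N j * (w:ℚ)^j
      = ∑ A ∈ (T p N).powersetCard j, ∏ k ∈ A, ((w:ℚ) * (k:ℚ)⁻¹) := by
    rw [sig, Finset.sum_mul]
    refine Finset.sum_congr rfl fun A hA => ?_
    rw [Finset.prod_mul_distrib, Finset.prod_const, (mem_powersetCard.1 hA).2]
    ring
  have e2 : ∑ A ∈ (T p N).powersetCard j, ∏ k ∈ A, ((psi p M w' k : ℕ):ℚ)⁻¹
      = sig p N j := by
    rw [sig]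
    exact esymm_reindex (f := fun k => (k:ℚ)⁻¹) (psi p M w') (psi p M w)
      (fun k hk => psi_mem hM1 hMN hpw' hk) (fun k hk => psi_mem hM1 hMN hw hk)
      (fun k _ => psi_psi hww') (fun k _ => psi_psi hw'w)
  have e3 : sig p N j * ((w:ℚ)^j - 1)
      = ∑ A ∈ (T p N).powersetCard j,
          ((∏ k ∈ A, ((w:ℚ) * (k:ℚ)⁻¹)) - ∏ k ∈ A, ((psi p M w' k : ℕ):ℚ)⁻¹) := by
    rw [Finset.sum_sub_distrib, ← e1, e2]
    ring
  rw [e3]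
  refine padicNorm.sum_le' (fun A hA => ?_) (eps_nonneg M)
  have hsub : ∀ k ∈ A, k ∈ T p N := fun k hk => (mem_powersetCard.1 hA).1 hk
  refine prod_cong (eps_nonneg M) (eps_le_one M) ?_ ?_ ?_
  · intro k hk
    rw [padicNorm.mul]
    exact mul_le_one₀ (padicNorm.of_nat w) (padicNorm.nonneg _)
      (le_of_eq (norm_inv_unit ((mem_T.1 (hsub k hk)).2)))
  · intro k hk
    exact le_of_eq (norm_inv_unit ((mem_T.1 (psi_mem hM1 hMN hpw' (hsub k hk))).2))
  · intro k hk
    exact key_cong hM1 hMN hww' hpw' (hsub k hk)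

lemma sig_le_one (j : ℕ) : padicNorm p (sig p N j) ≤ 1 := by
  refine padicNorm.sum_le' (fun A hA => ?_) zero_le_one
  exact prod_norm_le_one fun k hk =>
    le_of_eq (norm_inv_unit ((mem_T.1 ((mem_powersetCard.1 hA).1 hk)).2))

lemma sig_bound_unit {j : ℕ} {X ε : ℚ} (hX : padicNorm p X = 1)
    (h : padicNorm p (sig p N j * X) ≤ ε) : padicNorm p (sig p N j) ≤ ε := by
  rwa [padicNorm.mul, hX, mul_one] at h

lemma not_dvd_two (hp5 : 5 ≤ p) : ¬ p ∣ 2 := fun h => by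
  have := Nat.le_of_dvd (by norm_num) h; omega

lemma not_dvd_three (hp5 : 5 ≤ p) : ¬ p ∣ 3 := fun h => by
  have := Nat.le_of_dvd (by norm_num) h; omega

lemma sig_two (hp5 : 5 ≤ p) (hM1 : 1 ≤ M) (hMN : p ^ M ∣ N) :
    padicNorm p (sig p N 2) ≤ (p:ℚ) ^ (-(M:ℤ)) := by
  have h := sig_rot hM1 hMN (w := 2) (not_dvd_two hp5) 2
  have hX : ((2:ℕ):ℚ)^2 - 1 = ((3:ℕ):ℚ) := by norm_num
  rw [hX] at h
  exact sig_bound_unit (norm_nat_unit (not_dvd_three hp5)) h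

lemma sig_three (hp5 : 5 ≤ p) (hM1 : 1 ≤ M) (hMN : p ^ M ∣ N) :
    padicNorm p (sig p N 3) ≤ (p:ℚ) ^ (-(M:ℤ)) := by
  set w := p ^ M - 1 with hwdef
  have hpM1 : 1 < p ^ M := Nat.one_lt_pow (by omega) hp.out.one_lt
  have hw : ¬ p ∣ w := by
    intro h
    have h2 : p ∣ p ^ M := dvd_pow_self p (by omega : M ≠ 0)
    have h3 : p ∣ 1 := by
      have he : (1:ℕ) = p ^ M - w := by omega
      rw [he]; exact Nat.dvd_sub h2 h
    exact absurd (Nat.le_of_dvd one_pos h3) (by have := hp.out.two_le; omega)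
  have h := sig_rot hM1 hMN hw 3
  have hw1 : 1 ≤ w ^ 3 := Nat.one_le_pow _ _ (by omega)
  have hXeq : ((w:ℕ):ℚ)^3 - 1 = ((w^3 - 1 : ℕ):ℚ) := by
    push_cast [Nat.cast_sub hw1]
    ring
  rw [hXeq] at h
  refine sig_bound_unit (norm_nat_unit ?_) h
  intro hdvd
  have hzd : (p:ℤ) ∣ ((w:ℤ)^3 - 1) := by
    have : (p:ℤ) ∣ ((w^3 - 1 : ℕ) : ℤ) := Int.natCast_dvd_natCast.2 hdvd
    rwa [Nat.cast_sub hw1, Nat.cast_pow, Nat.cast_one] at this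
  have hwz : (w:ℤ) = (p:ℤ)^M - 1 := by
    rw [hwdef]
    push_cast [Nat.cast_sub hpM1.le]
    ring
  rw [hwz] at hzd
  have hPd : (p:ℤ) ∣ (p:ℤ)^M := dvd_pow_self _ (by omega : M ≠ 0)
  have h2 : (p:ℤ) ∣ 2 := by
    have key : (2:ℤ) = ((p:ℤ)^M) * (((p:ℤ)^M)^2 - 3*((p:ℤ)^M) + 3) - (((p:ℤ)^M - 1)^3 - 1) := by
      ring
    rw [key]
    exact dvd_sub (hPd.mul_right _) hzd
  have : (p:ℕ) ∣ 2 := Int.ofNat_dvd.mp (by exact_mod_cast h2)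
  exact not_dvd_two hp5 this

lemma sig_gen (hp5 : 5 ≤ p) (hM1 : 1 ≤ M) (hMN : p ^ M ∣ N) (j : ℕ) (hj : 1 ≤ j) :
    padicNorm p (sig p N j) ≤ (p:ℚ) ^ (((1:ℤ) + padicValNat p j) - M) := by
  have hw : ¬ p ∣ (p + 1) := by
    intro h
    have : p ∣ 1 := (Nat.dvd_add_right dvd_rfl).mp h
    exact absurd (Nat.le_of_dvd one_pos this) (by have := hp.out.two_le; omega)
  have h := sig_rot hM1 hMN hw j
  set n := (p+1)^j - 1 with hndef
  have hn1 : 1 ≤ (p+1)^j := Nat.one_le_pow _ _ (by omega)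
  have hn0 : n ≠ 0 := by
    have : 1 < (p+1)^j := Nat.one_lt_pow (by omega) (by have := hp.out.two_le; omega)
    omega
  have hXeq : (((p+1:ℕ)):ℚ)^j - 1 = ((n : ℕ):ℚ) := by
    rw [hndef]
    push_cast [Nat.cast_sub hn1]
    ring
  -- LTE
  have hodd : Odd p := hp.out.odd_of_ne_two (by omega : p ≠ 2)
  have hlte := Nat.emultiplicity_pow_sub_pow (p := p) hp.out hodd
    (x := p + 1) (y := 1) (by simpa using (dvd_refl p)) hw j
  have hvn : padicValNat p n = 1 + padicValNat p j := by
    have h1n : 0 < n := Nat.pos_of_ne_zero hn0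
    have e1 : (padicValNat p n : ℕ∞) = emultiplicity p n := padicValNat_eq_emultiplicity h1n.ne'
    have e2 : (padicValNat p p : ℕ∞) = emultiplicity p p :=
      padicValNat_eq_emultiplicity hp.out.pos.ne'
    have e3 : (padicValNat p j : ℕ∞) = emultiplicity p j :=
      padicValNat_eq_emultiplicity (by omega)
    have hn' : n = (p+1)^j - 1^j := by simp [hndef]
    have hp' : p = (p + 1) - 1 := by omega
    have : (padicValNat p n : ℕ∞) = (padicValNat p p : ℕ∞) + (padicValNat p j : ℕ∞) := by
      rw [e1, e2, e3]
      rw [hn']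
      rw [hlte]
      norm_num
    have hvp : padicValNat p p = 1 := padicValNat.self hp.out.one_lt
    rw [hvp] at this
    exact_mod_cast this
  rw [hXeq] at h
  rw [padicNorm.mul, norm_nat_eq hn0, hvn] at h
  have hppos : (0:ℚ) < (p:ℚ) := by exact_mod_cast hp.out.pos
  have hq : (0:ℚ) < (p:ℚ) ^ (-((1 + padicValNat p j : ℕ) : ℤ)) := by positivity
  rw [← le_div_iff₀ hq] at h
  calc padicNorm p (sig p N j)
      ≤ (p:ℚ) ^ (-(M:ℤ)) / (p:ℚ) ^ (-((1 + padicValNat p j : ℕ) : ℤ)) := h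
    _ = (p:ℚ) ^ (((1:ℤ) + padicValNat p j) - M) := by
        rw [← zpow_sub₀ (ne_of_gt hppos)]
        congr 1
        push_cast
        ring


lemma sum_reindex {f : ℕ → ℚ} (φ φ' : ℕ → ℕ)
    (hφ : ∀ k ∈ T p N, φ k ∈ T p N) (hφ' : ∀ k ∈ T p N, φ' k ∈ T p N)
    (h1 : ∀ k ∈ T p N, φ' (φ k) = k) (h2 : ∀ k ∈ T p N, φ (φ' k) = k) :
    ∑ k ∈ T p N, f (φ k) = ∑ k ∈ T p N, f k :=
  Finset.sum_nbij' φ φ' hφ hφ' h1 h2 (fun k _ => rfl)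

lemma mem_T_ne_zero {k : ℕ} (hk : k ∈ T p N) : k ≠ 0 := by
  intro h
  exact (mem_T.1 hk).2 (h ▸ dvd_zero p)

lemma mem_T_cast_ne {k : ℕ} (hk : k ∈ T p N) : (k:ℚ) ≠ 0 := by
  exact_mod_cast mem_T_ne_zero hk

lemma ptwo (hp5 : 5 ≤ p) (hM1 : 1 ≤ M) (hMN : p ^ M ∣ N) :
    padicNorm p (∑ k ∈ T p N, ((k:ℚ)⁻¹)^2) ≤ (p:ℚ) ^ (-(M:ℤ)) := by
  set P2 := ∑ k ∈ T p N, ((k:ℚ)⁻¹)^2 with hP2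
  obtain ⟨w', hww', hpw'⟩ := exists_inv hM1 (not_dvd_two hp5)
  have hw'w : w' * 2 ≡ 1 [MOD p ^ M] := by rwa [Nat.mul_comm] at hww'
  have e1 : ∑ k ∈ T p N, (((2:ℕ):ℚ) * (k:ℚ)⁻¹)^2 = 4 * P2 := by
    rw [hP2, Finset.mul_sum]
    refine Finset.sum_congr rfl fun k _ => by push_cast; ring
  have e2 : ∑ k ∈ T p N, (((psi p M w' k : ℕ):ℚ)⁻¹)^2 = P2 := by
    rw [hP2]
    exact sum_reindex (f := fun k => ((k:ℚ)⁻¹)^2) (psi p M w') (psi p M 2)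
      (fun k hk => psi_mem hM1 hMN hpw' hk)
      (fun k hk => psi_mem hM1 hMN (not_dvd_two hp5) hk)
      (fun k _ => psi_psi hww') (fun k _ => psi_psi hw'w)
  have e3 : (3:ℚ) * P2 = ∑ k ∈ T p N,
      ((((2:ℕ):ℚ) * (k:ℚ)⁻¹)^2 - (((psi p M w' k : ℕ):ℚ)⁻¹)^2) := by
    rw [Finset.sum_sub_distrib, e1, e2]
    ring
  have hbound : padicNorm p ((3:ℚ) * P2) ≤ (p:ℚ) ^ (-(M:ℤ)) := by
    rw [e3]
    refine padicNorm.sum_le' (fun k hk => ?_) (eps_nonneg M)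
    have hx : padicNorm p (((2:ℕ):ℚ) * (k:ℚ)⁻¹) ≤ 1 := by
      rw [padicNorm.mul]
      exact mul_le_one₀ (padicNorm.of_nat 2) (padicNorm.nonneg _)
        (le_of_eq (norm_inv_unit ((mem_T.1 hk).2)))
    have hy : padicNorm p ((((psi p M w' k : ℕ):ℚ))⁻¹) ≤ 1 :=
      le_of_eq (norm_inv_unit ((mem_T.1 (psi_mem hM1 hMN hpw' hk)).2))
    have hfact : (((2:ℕ):ℚ) * (k:ℚ)⁻¹)^2 - (((psi p M w' k : ℕ):ℚ)⁻¹)^2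
        = ((((2:ℕ):ℚ) * (k:ℚ)⁻¹) - ((psi p M w' k : ℕ):ℚ)⁻¹)
          * ((((2:ℕ):ℚ) * (k:ℚ)⁻¹) + ((psi p M w' k : ℕ):ℚ)⁻¹) := by ring
    rw [hfact, padicNorm.mul]
    calc padicNorm p ((((2:ℕ):ℚ) * (k:ℚ)⁻¹) - ((psi p M w' k : ℕ):ℚ)⁻¹)
          * padicNorm p ((((2:ℕ):ℚ) * (k:ℚ)⁻¹) + ((psi p M w' k : ℕ):ℚ)⁻¹)
        ≤ (p:ℚ) ^ (-(M:ℤ)) * 1 := by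
          refine mul_le_mul (key_cong hM1 hMN hww' hpw' hk) ?_ (padicNorm.nonneg _) (eps_nonneg M)
          exact le_trans padicNorm.nonarchimedean (max_le hx hy)
      _ = (p:ℚ) ^ (-(M:ℤ)) := mul_one _
  have h3 : padicNorm p ((3:ℚ) * P2) = padicNorm p P2 := by
    rw [padicNorm.mul]
    have : padicNorm p (3:ℚ) = 1 := by
      have := norm_nat_unit (p := p) (not_dvd_three hp5)
      push_cast at this
      exact this
    rw [this, one_mul]
  rwa [h3] at hbound

lemma sig_one_eq : sig p N 1 = ∑ k ∈ T p N, (k:ℚ)⁻¹ := by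
  rw [sig, Finset.powersetCard_one, Finset.sum_map]
  refine Finset.sum_congr rfl fun k _ => ?_
  simp

lemma sig_one (hp5 : 5 ≤ p) (hM1 : 1 ≤ M) (hMN : p ^ M ∣ N) :
    padicNorm p (sig p N 1) ≤ (p:ℚ) ^ (-(2*M:ℤ)) := by
  have hpN : p ∣ N := dvd_trans (dvd_pow_self p (by omega : M ≠ 0)) hMN
  set S := ∑ k ∈ T p N, (k:ℚ)⁻¹ with hS
  -- the involution k ↦ N - k
  have hφmem : ∀ k ∈ T p N, N - k ∈ T p N := by
    intro k hk
    obtain ⟨hkN, hpk⟩ := mem_T.1 hk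
    have hk0 : k ≠ 0 := mem_T_ne_zero hk
    rw [mem_T]
    constructor
    · omega
    · intro h
      have : p ∣ k := by
        have h2 : k = N - (N - k) := by omega
        rw [h2]
        exact Nat.dvd_sub hpN h
      exact hpk this
  have hφφ : ∀ k ∈ T p N, N - (N - k) = k := by
    intro k hk
    have := (mem_T.1 hk).1
    omega
  have e0 : ∑ k ∈ T p N, ((N - k : ℕ):ℚ)⁻¹ = S := by
    rw [hS]
    exact sum_reindex (f := fun k => (k:ℚ)⁻¹) (fun k => N - k) (fun k => N - k)
      hφmem hφmem hφφ hφφ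
  have e1 : (2:ℚ) * S = ∑ k ∈ T p N, ((k:ℚ)⁻¹ + ((N - k : ℕ):ℚ)⁻¹) := by
    rw [Finset.sum_add_distrib, e0, ← hS]
    ring
  set τ := ∑ k ∈ T p N, ((k * (N - k) : ℕ):ℚ)⁻¹ with hτ
  have key1 : ∀ k ∈ T p N, (k:ℚ)⁻¹ + ((N - k : ℕ):ℚ)⁻¹ = (N:ℚ) * ((k * (N - k) : ℕ):ℚ)⁻¹ := by
    intro k hk
    have hk0 : (k:ℚ) ≠ 0 := mem_T_cast_ne hk
    have hNk0 : ((N - k : ℕ):ℚ) ≠ 0 := mem_T_cast_ne (hφmem k hk)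
    have hcast : ((N - k : ℕ):ℚ) = (N:ℚ) - (k:ℚ) := by
      have := (mem_T.1 hk).1
      push_cast [Nat.cast_sub this.le]
      ring
    have hprod : ((k * (N - k) : ℕ):ℚ) = (k:ℚ) * ((N:ℚ) - (k:ℚ)) := by
      push_cast [Nat.cast_sub ((mem_T.1 hk).1.le)]
      ring
    rw [hcast] at hNk0
    rw [hcast, hprod]
    field_simp
    ring
  have e2 : (2:ℚ) * S = (N:ℚ) * τ := by
    rw [e1, hτ, Finset.mul_sum]
    exact Finset.sum_congr rfl key1
  -- τ ≡ -P2
  set P2 := ∑ k ∈ T p N, ((k:ℚ)⁻¹)^2 with hP2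
  have key2 : ∀ k ∈ T p N, ((k * (N - k) : ℕ):ℚ)⁻¹ + ((k:ℚ)⁻¹)^2
      = (N:ℚ) * ((k * k * (N - k) : ℕ):ℚ)⁻¹ := by
    intro k hk
    have hk0 : (k:ℚ) ≠ 0 := mem_T_cast_ne hk
    have hNk0 : ((N - k : ℕ):ℚ) ≠ 0 := mem_T_cast_ne (hφmem k hk)
    have hle := (mem_T.1 hk).1.le
    have hcast : ((N - k : ℕ):ℚ) = (N:ℚ) - (k:ℚ) := by
      push_cast [Nat.cast_sub hle]; ring
    have hprod : ((k * (N - k) : ℕ):ℚ) = (k:ℚ) * ((N:ℚ) - (k:ℚ)) := by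
      push_cast [Nat.cast_sub hle]; ring
    have hprod2 : ((k * k * (N - k) : ℕ):ℚ) = (k:ℚ) * (k:ℚ) * ((N:ℚ) - (k:ℚ)) := by
      push_cast [Nat.cast_sub hle]; ring
    rw [hcast] at hNk0
    rw [hprod, hprod2]
    field_simp
    ring
  have hτP2 : padicNorm p (τ + P2) ≤ (p:ℚ) ^ (-(M:ℤ)) := by
    have e3 : τ + P2 = ∑ k ∈ T p N, ((N:ℚ) * ((k * k * (N - k) : ℕ):ℚ)⁻¹) := by
      rw [hτ, hP2, ← Finset.sum_add_distrib]
      exact Finset.sum_congr rfl key2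
    rw [e3]
    refine padicNorm.sum_le' (fun k hk => ?_) (eps_nonneg M)
    rw [padicNorm.mul]
    have hu : padicNorm p (((k * k * (N - k) : ℕ):ℚ)⁻¹) = 1 := by
      refine norm_inv_unit ?_
      intro h
      rcases (Nat.Prime.dvd_mul hp.out).1 h with h | h
      · rcases (Nat.Prime.dvd_mul hp.out).1 h with h | h <;> exact (mem_T.1 hk).2 h
      · exact (mem_T.1 (hφmem k hk)).2 h
    rw [hu, mul_one]
    exact norm_nat_dvd_le hMN
  have hτ_le : padicNorm p τ ≤ (p:ℚ) ^ (-(M:ℤ)) := by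
    have : τ = (τ + P2) - P2 := by ring
    rw [this]
    exact le_trans padicNorm.sub
      (max_le hτP2 (by rw [hP2]; exact ptwo hp5 hM1 hMN))
  have h2S : padicNorm p ((2:ℚ) * S) ≤ (p:ℚ) ^ (-(2*M:ℤ)) := by
    rw [e2, padicNorm.mul]
    calc padicNorm p (N:ℚ) * padicNorm p τ
        ≤ (p:ℚ) ^ (-(M:ℤ)) * (p:ℚ) ^ (-(M:ℤ)) := by
          refine mul_le_mul ?_ hτ_le (padicNorm.nonneg _) (eps_nonneg M)
          exact norm_nat_dvd_le hMN
      _ = (p:ℚ) ^ (-(2*M:ℤ)) := by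
          rw [← zpow_add₀ (by exact_mod_cast hp.out.pos.ne' : (p:ℚ) ≠ 0)]
          congr 1
          ring
  have h2 : padicNorm p ((2:ℚ) * S) = padicNorm p S := by
    rw [padicNorm.mul]
    have : padicNorm p (2:ℚ) = 1 := by
      have := norm_nat_unit (p := p) (not_dvd_two hp5)
      push_cast at this
      exact this
    rw [this, one_mul]
  rw [sig_one_eq, ← hS]
  rwa [h2] at h2S

end M

lemma choose_ratio (d m : ℕ) :
    (((d + m).choose m : ℕ) : ℚ) = ∏ k ∈ Icc 1 m, ((d:ℚ) + k)/k := by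
  induction m with
  | zero => simp
  | succ m ih =>
    rw [Finset.prod_Icc_succ_top (by omega : 1 ≤ m + 1), ← ih]
    have h2 : ((d+m+1) * ((d+m).choose m) : ℕ) = ((d+m+1).choose (m+1) * (m+1) : ℕ) := by
      simpa [Nat.succ_eq_add_one] using Nat.add_one_mul_choose_eq (d+m) m
    have h3 := congrArg (fun n : ℕ => (n:ℚ)) h2
    push_cast at h3
    have hm1 : ((m:ℚ)+1) ≠ 0 := by positivity
    have hcast : d + (m+1) = (d + m) + 1 := by omega
    rw [hcast]
    push_cast
    rw [← mul_div_assoc, eq_div_iff hm1]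
    linear_combination -h3

lemma choose_prod (hb : 0 < p) {a b c : ℕ} (hbpos : 0 < b) (hc : a = b + c) :
    (((a * p - 1).choose (b * p - 1) : ℕ) : ℚ)
      = (((a-1).choose (b-1) : ℕ) : ℚ) * ∏ k ∈ T p (b*p), (1 + (c*p : ℚ) * (k:ℚ)⁻¹) := by
  have hp2 := hp.out.two_le
  have hbp : 1 ≤ b * p := Nat.mul_pos hbpos (by omega)
  have h1 : a * p - 1 = c * p + (b * p - 1) := by
    subst hc
    have : (b + c) * p = b * p + c * p := by ring
    omega
  have h2 : a - 1 = c + (b - 1) := by omega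
  rw [h1, h2, choose_ratio, choose_ratio]
  -- split the product over Icc 1 (b*p - 1)
  rw [← Finset.prod_filter_mul_prod_filter_not (Icc 1 (b*p-1)) (fun k => p ∣ k)]
  congr 1
  · -- divisible part equals prod over Icc 1 (b-1)
    rw [eq_comm]
    refine Finset.prod_nbij' (fun j => p * j) (fun k => k / p) ?_ ?_ ?_ ?_ ?_
    · intro j hj
      simp only [Finset.mem_filter, Finset.mem_Icc] at hj ⊢
      obtain ⟨h1j, h2j⟩ := hj
      have hj1 : 1 * 1 ≤ p * j := Nat.mul_le_mul (by omega) h1j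
      have hj2 : p * j ≤ p * (b-1) := Nat.mul_le_mul_left _ h2j
      have hb' : b = (b-1)+1 := by omega
      have hj3 : p * (b-1) + p = b * p := by
        conv_rhs => rw [hb']
        ring
      refine ⟨⟨by omega, by omega⟩, ⟨j, rfl⟩⟩
    · intro k hk
      simp only [Finset.mem_filter, Finset.mem_Icc] at hk ⊢
      obtain ⟨⟨h1k, h2k⟩, ⟨m, hm⟩⟩ := hk
      subst hm
      have h3 : p * m < b * p := by omega
      have h4 : m < b := Nat.lt_of_mul_lt_mul_left (by rwa [mul_comm b p] at h3)
      have h5 : 1 ≤ m := by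
        rcases Nat.eq_zero_or_pos m with rfl | h
        · omega
        · exact h
      rw [Nat.mul_div_cancel_left _ (by omega : 0 < p)]
      omega
    · intro j hj
      show p * j / p = j
      exact Nat.mul_div_cancel_left _ (by omega)
    · intro k hk
      simp only [Finset.mem_filter] at hk
      obtain ⟨_, m, hm⟩ := hk
      subst hm
      show p * (p * m / p) = p * m
      rw [Nat.mul_div_cancel_left _ (by omega : 0 < p)]
    · intro j hj
      simp only [Finset.mem_Icc] at hj
      have hp0 : (p:ℚ) ≠ 0 := by positivity
      have hj0 : (j:ℚ) ≠ 0 := Nat.cast_ne_zero.2 (by omega)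
      push_cast
      rw [eq_comm]
      field_simp
  · -- non-divisible part equals prod over T
    have hset : (Icc 1 (b*p-1)).filter (fun k => ¬ p ∣ k) = T p (b*p) := by
      ext k
      simp only [Finset.mem_filter, Finset.mem_Icc, mem_T, Finset.mem_range]
      constructor
      · rintro ⟨⟨h1k, h2k⟩, h3k⟩
        exact ⟨by omega, h3k⟩
      · rintro ⟨h1k, h2k⟩
        have : k ≠ 0 := fun h => h2k (h ▸ dvd_zero p)
        exact ⟨⟨by omega, by omega⟩, h2k⟩
    rw [hset]
    refine Finset.prod_congr rfl fun k hk => ?_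
    have hk0 : (k:ℚ) ≠ 0 := mem_T_cast_ne hk
    push_cast
    field_simp
    ring


lemma norm_pow (x : ℚ) (j : ℕ) : padicNorm p (x^j) = (padicNorm p x)^j := by
  induction j with
  | zero => simp [padicNorm.one]
  | succ j ih => rw [pow_succ, padicNorm.mul, ih, pow_succ]

lemma prod_expand (N : ℕ) (x : ℚ) :
    ∏ k ∈ T p N, (1 + x * (k:ℚ)⁻¹)
      = ∑ j ∈ range (#(T p N) + 1), x^j * sig p N j := by
  have e1 : ∏ k ∈ T p N, (1 + x * (k:ℚ)⁻¹) = ∏ k ∈ T p N, (x * (k:ℚ)⁻¹ + 1) := by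
    exact Finset.prod_congr rfl fun k _ => by ring
  rw [e1, Finset.prod_add]
  simp only [Finset.prod_const_one, mul_one]
  rw [Finset.sum_powerset]
  refine Finset.sum_congr rfl fun j hj => ?_
  rw [sig, Finset.mul_sum]
  refine Finset.sum_congr rfl fun A hA => ?_
  rw [Finset.prod_mul_distrib, Finset.prod_const, (mem_powersetCard.1 hA).2]

lemma five_pow_aux (n : ℕ) : 2*n + 5 ≤ 5^(n+1) := by
  induction n with
  | zero => norm_num
  | succ n ih =>
    have h : 5^(n+1+1) = 5 * 5^(n+1) := by ring
    omega

lemma five_pow_aux2 (n : ℕ) : 1 ≤ n → n + 4 ≤ 5^n := by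
  induction n with
  | zero => omega
  | succ n ih =>
    intro _
    have h : 5^(n+1) = 5 * 5^n := by ring
    rcases Nat.eq_zero_or_pos n with rfl | hn
    · norm_num
    · have := ih hn
      omega

lemma val_le_of_ge4 {j : ℕ} (hp5 : 5 ≤ p) (hj : 4 ≤ j) : padicValNat p j + 3 ≤ j := by
  set v := padicValNat p j with hv
  have h1 : p ^ v ∣ j := pow_padicValNat_dvd
  have h2 : p ^ v ≤ j := Nat.le_of_dvd (by omega) h1
  have h3 : 5 ^ v ≤ p ^ v := Nat.pow_le_pow_left hp5 v
  rcases Nat.eq_zero_or_pos v with h | h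
  · omega
  · have := five_pow_aux2 v h
    omega

lemma j_ge_of_val {j Mm : ℕ} (hp5 : 5 ≤ p) (hM1 : 1 ≤ Mm) (hj : 4 ≤ j)
    (hv : Mm ≤ padicValNat p j + 1) : 2*Mm + 1 ≤ j := by
  set v := padicValNat p j with hvdef
  have h1 : p ^ v ∣ j := pow_padicValNat_dvd
  have h2 : p ^ v ≤ j := Nat.le_of_dvd (by omega) h1
  have h3 : 5 ^ v ≤ p ^ v := Nat.pow_le_pow_left hp5 v
  rcases Nat.lt_or_ge Mm 2 with hM | hM
  · omega
  · -- Mm ≥ 2 : v ≥ Mm - 1 ≥ 1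
    have hv1 : Mm - 1 ≤ v := by omega
    have h4 : 5 ^ (Mm - 1) ≤ 5 ^ v := Nat.pow_le_pow_right (by norm_num) hv1
    have h5 : 2*(Mm-2) + 5 ≤ 5^(Mm-2+1) := five_pow_aux (Mm-2)
    have h6 : Mm - 2 + 1 = Mm - 1 := by omega
    rw [h6] at h5
    omega

lemma W_bound {a b c : ℕ} (hb : 0 < b) (hc : a = b + c) (hc0 : 0 < c)
    (hlt : padicValNat p c < padicValNat p b) :
    padicValNat p b ≤ padicValNat p c + padicValNat p ((a-1).choose (b-1)) := by
  have ha0 : a ≠ 0 := by omega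
  have hCC : 0 < (a-1).choose (b-1) := Nat.choose_pos (by omega)
  have hCab : 0 < a.choose b := Nat.choose_pos (by omega)
  set β := padicValNat p b with hβ
  set γ := padicValNat p c with hγ
  have hpa : p ^ γ ∣ a := by
    rw [hc]
    exact dvd_add (dvd_trans (pow_dvd_pow p hlt.le) pow_padicValNat_dvd) pow_padicValNat_dvd
  have hnpa : ¬ p ^ (γ+1) ∣ a := by
    intro h
    have hb' : p^(γ+1) ∣ b := dvd_trans (pow_dvd_pow p (by omega)) pow_padicValNat_dvd
    have hcd : p^(γ+1) ∣ c := by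
      have : c = a - b := by omega
      rw [this]
      exact Nat.dvd_sub h hb'
    have := (padicValNat_dvd_iff (γ+1) c).1 hcd
    rcases this with h0 | hle
    · omega
    · omega
  have hva : padicValNat p a = γ := by
    have h1 : γ ≤ padicValNat p a := by
      rcases (padicValNat_dvd_iff γ a).1 hpa with h0 | hle
      · omega
      · exact hle
    have h2 : ¬(γ+1 ≤ padicValNat p a) := fun h =>
      hnpa ((padicValNat_dvd_iff (γ+1) a).2 (Or.inr h))
    omega
  have hid : a * ((a-1).choose (b-1)) = (a.choose b) * b := by
    have h := Nat.add_one_mul_choose_eq (a-1) (b-1)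
    have e1 : a - 1 + 1 = a := by omega
    have e2 : b - 1 + 1 = b := by omega
    simpa [Nat.succ_eq_add_one, e1, e2] using h
  have hv := congrArg (padicValNat p) hid
  rw [padicValNat.mul ha0 (by omega), padicValNat.mul (by omega) (by omega)] at hv
  omega

lemma step (hp5 : 5 ≤ p) {a b : ℕ} (ha : 0 < a) (hb : 0 < b) :
    padicNorm p (((a * p - 1).choose (b * p - 1) : ℚ) - ((a - 1).choose (b - 1) : ℚ))
      ≤ (p : ℚ) ^ (-3 : ℤ) * (padicNorm p (b : ℚ)) ^ 2 * padicNorm p ((a : ℚ) - (b : ℚ)) := by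
  have hp2 := hp.out.two_le
  have hp0 : (p:ℚ) ≠ 0 := by
    exact_mod_cast (by omega : p ≠ 0)
  have hp1 : (1:ℚ) ≤ (p:ℚ) := by exact_mod_cast (by omega : 1 ≤ p)
  have hRHS0 : 0 ≤ (p : ℚ) ^ (-3 : ℤ) * (padicNorm p (b : ℚ)) ^ 2 * padicNorm p ((a : ℚ) - (b : ℚ)) := by
    have := padicNorm.nonneg (p := p) ((a : ℚ) - (b : ℚ))
    positivity
  rcases lt_trichotomy a b with hab | rfl | hab
  · have h1 : a * p - 1 < b * p - 1 := by
      have h2 : a * p < b * p := (Nat.mul_lt_mul_right (by omega : 0 < p)).2 hab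
      have h3 : 0 < a * p := Nat.mul_pos ha (by omega)
      omega
    have h2 : a - 1 < b - 1 := by omega
    rw [Nat.choose_eq_zero_of_lt h1, Nat.choose_eq_zero_of_lt h2]
    simpa using hRHS0
  · rw [Nat.choose_self, Nat.choose_self]
    simpa using hRHS0
  · -- main case b < a
    set c := a - b with hcdef
    have hc0 : 0 < c := by omega
    have hc : a = b + c := by omega
    set N := b * p with hNdef
    set β := padicValNat p b with hβ
    set γ := padicValNat p c with hγ
    set Mm := β + 1 with hMdef
    have hM1 : 1 ≤ Mm := by omega
    have hMN : p ^ Mm ∣ N := by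
      rw [hMdef, pow_succ, hNdef]
      exact mul_dvd_mul pow_padicValNat_dvd dvd_rfl
    set CC := (a-1).choose (b-1) with hCCdef
    have hCCpos : 0 < CC := by
      rw [hCCdef]; exact Nat.choose_pos (by omega)
    set W := padicValNat p CC with hW
    set D := #(T p N) with hD
    set x : ℚ := (c * p : ℚ) with hx
    have hWB : β ≤ γ + W ∨ β ≤ γ := by
      rcases Nat.lt_or_ge γ β with h | h
      · exact Or.inl (W_bound hb hc hc0 h)
      · exact Or.inr h
    have hdiff : (((a * p - 1).choose (b * p - 1) : ℕ) : ℚ) - ((CC:ℕ):ℚ)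
        = ∑ j ∈ Ico 1 (D+1), (CC:ℚ) * (x^j * sig p N j) := by
      rw [choose_prod (p := p) (by omega) hb hc, ← hNdef, ← hCCdef, ← hx, prod_expand, ← hD]
      rw [Finset.range_eq_Ico, Finset.sum_eq_sum_Ico_succ_bot (by omega : 0 < D+1)]
      have hs0 : x^0 * sig p N 0 = 1 := by
        rw [pow_zero, one_mul, sig, Finset.powersetCard_zero, Finset.sum_singleton,
          Finset.prod_empty]
      rw [hs0, mul_add, mul_one, Finset.mul_sum]
      ring
    have hRHS : (p : ℚ) ^ (-3 : ℤ) * (padicNorm p (b : ℚ)) ^ 2 * padicNorm p ((a : ℚ) - (b : ℚ))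
        = (p:ℚ) ^ (-(3 + 2*(β:ℤ) + (γ:ℤ))) := by
      have h1 : padicNorm p (b:ℚ) = (p:ℚ)^(-(β:ℤ)) := norm_nat_eq (by omega)
      have h2 : (a:ℚ) - (b:ℚ) = ((c:ℕ):ℚ) := by
        rw [hcdef]
        push_cast [Nat.cast_sub (by omega : b ≤ a)]
        ring
      rw [h1, h2, norm_nat_eq (by omega : c ≠ 0), ← hγ]
      rw [sq, ← zpow_add₀ hp0, ← zpow_add₀ hp0, ← zpow_add₀ hp0]
      congr 1
      ring
    rw [hdiff, hRHS]
    refine padicNorm.sum_le' (fun j hj => ?_) (by positivity)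
    rw [Finset.mem_Ico] at hj
    have hj1 : 1 ≤ j := hj.1
    have hCCn : padicNorm p ((CC:ℕ):ℚ) = (p:ℚ)^(-(W:ℤ)) := norm_nat_eq (by omega)
    have hxn : padicNorm p x = (p:ℚ)^(-((γ:ℤ)+1)) := by
      rw [hx, padicNorm.mul, norm_nat_eq (by omega : c ≠ 0), ← hγ,
        padicNorm.padicNorm_p (by omega : 1 < p), ← zpow_neg_one, ← zpow_add₀ hp0]
      congr 1
      ring
    have hxjn : padicNorm p (x^j) = (p:ℚ)^((-((γ:ℤ)+1))*(j:ℤ)) := by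
      rw [norm_pow, hxn, ← zpow_natCast ((p:ℚ)^(-((γ:ℤ)+1))) j, ← zpow_mul]
    have hassemble : ∀ (w : ℤ), padicNorm p (sig p N j) ≤ (p:ℚ)^w →
        (-(W:ℤ)) + (-(((γ:ℤ)+1)*(j:ℤ))) + w ≤ -(3 + 2*(β:ℤ) + (γ:ℤ)) →
        padicNorm p ((CC:ℚ) * (x^j * sig p N j)) ≤ (p:ℚ) ^ (-(3 + 2*(β:ℤ) + (γ:ℤ))) := by
      intro w hsig hexp
      have hexp' : (-(W:ℤ)) + (-((γ:ℤ)+1))*(j:ℤ) + w ≤ -(3 + 2*(β:ℤ) + (γ:ℤ)) := by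
        have e : (-(W:ℤ)) + (-((γ:ℤ)+1))*(j:ℤ) + w
            = (-(W:ℤ)) + (-(((γ:ℤ)+1)*(j:ℤ))) + w := by ring
        rw [e]
        exact hexp
      rw [padicNorm.mul, padicNorm.mul, hCCn, hxjn, ← mul_assoc, ← zpow_add₀ hp0]
      calc (p:ℚ)^((-(W:ℤ)) + (-((γ:ℤ)+1))*(j:ℤ)) * padicNorm p (sig p N j)
          ≤ (p:ℚ)^((-(W:ℤ)) + (-((γ:ℤ)+1))*(j:ℤ)) * (p:ℚ)^w := by
            exact mul_le_mul_of_nonneg_left hsig (by positivity)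
        _ = (p:ℚ)^((-(W:ℤ)) + (-((γ:ℤ)+1))*(j:ℤ) + w) := by rw [← zpow_add₀ hp0]
        _ ≤ (p:ℚ) ^ (-(3 + 2*(β:ℤ) + (γ:ℤ))) := zpow_le_zpow_right₀ hp1 hexp'
    -- case analysis on j
    match j, hj1 with
    | 0, h => exact absurd h (by omega)
    | 1, _ =>
      exact hassemble (-(2*(Mm:ℤ))) (sig_one hp5 hM1 hMN) (by push_cast; omega)
    | 2, _ =>
      refine hassemble (-(Mm:ℤ)) (sig_two hp5 hM1 hMN) (by push_cast; omega)
    | 3, _ =>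
      refine hassemble (-(Mm:ℤ)) (sig_three hp5 hM1 hMN) (by push_cast; omega)
    | (j'+4), _ =>
      have hj4 : 4 ≤ j' + 4 := by omega
      have hvj3 : padicValNat p (j'+4) + 3 ≤ j' + 4 := val_le_of_ge4 hp5 hj4
      have hE : ((γ:ℤ)+1)*((j':ℤ)+4) = ((γ:ℤ)+1)*(j':ℤ) + 4*(γ:ℤ) + 4 := by ring
      have hP : (j':ℤ) ≤ ((γ:ℤ)+1)*(j':ℤ) :=
        le_mul_of_one_le_left (by positivity) (by omega)
      rcases Nat.lt_or_ge (padicValNat p (j'+4) + 1) Mm with hcase | hcase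
      · refine hassemble (((1:ℤ) + padicValNat p (j'+4)) - Mm)
          (sig_gen hp5 hM1 hMN (j'+4) (by omega)) ?_
        generalize hg : padicValNat p (j'+4) = vj at hvj3 hcase ⊢
        push_cast
        omega
      · refine hassemble 0 (by simpa using sig_le_one (N := N) (j'+4)) ?_
        have hj2M : 2*Mm + 1 ≤ j' + 4 := j_ge_of_val hp5 hM1 hj4 hcase
        push_cast
        omega

end Stmt12

/-- (Modified Kazandzidis congruence) For a prime `p ≥ 5` and positive
integers `a, b, t`,
`|C(a p^t - 1, b p^t - 1) - C(a - 1, b - 1)|_p ≤ p^{-3} |b|_p² |a - b|_p`,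
where `C` is the binomial coefficient and `|·|_p` the p-adic absolute value on `ℚ`. -/
theorem stmt_12 (p : ℕ) (hp : p.Prime) (hp5 : 5 ≤ p) (a b t : ℕ)
    (ha : 0 < a) (hb : 0 < b) (ht : 0 < t) :
    padicNorm p ((((a * p ^ t - 1).choose (b * p ^ t - 1) : ℚ)) -
        (((a - 1).choose (b - 1) : ℚ)))
      ≤ (p : ℚ) ^ (-3 : ℤ) * (padicNorm p (b : ℚ)) ^ 2 * padicNorm p ((a : ℚ) - (b : ℚ)) := by
  haveI : Fact p.Prime := ⟨hp⟩
  have hp2 := hp.two_le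
  induction t, ht using Nat.le_induction with
  | base =>
    have h := Stmt12.step (p := p) hp5 ha hb
    rw [pow_one]
    exact h
  | succ t ht ih =>
    have hstep := Stmt12.step (p := p) hp5 (a := a * p ^ t) (b := b * p ^ t)
      (Nat.mul_pos ha (Nat.pow_pos (by omega))) (Nat.mul_pos hb (Nat.pow_pos (by omega)))
    rw [show a * p ^ t * p = a * p ^ (t+1) by rw [pow_succ]; ring,
        show b * p ^ t * p = b * p ^ (t+1) by rw [pow_succ]; ring] at hstep
    have hRHS0 : 0 ≤ (p : ℚ) ^ (-3 : ℤ) * (padicNorm p (b : ℚ)) ^ 2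
        * padicNorm p ((a : ℚ) - (b : ℚ)) := by
      have := padicNorm.nonneg (p := p) ((a : ℚ) - (b : ℚ))
      positivity
    have hXb : padicNorm p (((a * p ^ (t+1) - 1).choose (b * p ^ (t+1) - 1) : ℚ)
        - ((a * p ^ t - 1).choose (b * p ^ t - 1) : ℚ))
        ≤ (p : ℚ) ^ (-3 : ℤ) * (padicNorm p (b : ℚ)) ^ 2 * padicNorm p ((a : ℚ) - (b : ℚ)) := by
      refine le_trans hstep ?_
      have e1 : ((b * p ^ t : ℕ):ℚ) = (b:ℚ) * (p:ℚ)^t := by push_cast; ring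
      have e2 : ((a * p ^ t : ℕ):ℚ) - ((b * p ^ t : ℕ):ℚ) = (p:ℚ)^t * ((a:ℚ) - (b:ℚ)) := by
        push_cast; ring
      rw [e2, e1, padicNorm.mul, padicNorm.mul, Stmt12.norm_pow,
        padicNorm.padicNorm_p (by omega : 1 < p)]
      set r := ((p:ℚ)⁻¹)^t with hr
      have hp0 : (0:ℚ) < (p:ℚ) := by exact_mod_cast (by omega : 0 < p)
      have hr0 : 0 ≤ r := by positivity
      have hr1 : r ≤ 1 := by
        refine pow_le_one₀ (by positivity) ?_
        rw [inv_le_one_iff₀]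
        right
        exact_mod_cast (by omega : 1 ≤ p)
      have hb0 := padicNorm.nonneg (p := p) (b:ℚ)
      have hab0 := padicNorm.nonneg (p := p) ((a:ℚ) - (b:ℚ))
      calc (p : ℚ) ^ (-3 : ℤ) * (padicNorm p (b:ℚ) * r) ^ 2 * (r * padicNorm p ((a:ℚ) - (b:ℚ)))
          = ((p : ℚ) ^ (-3 : ℤ) * (padicNorm p (b:ℚ)) ^ 2 * padicNorm p ((a:ℚ) - (b:ℚ)))
            * (r^2 * r) := by ring
        _ ≤ ((p : ℚ) ^ (-3 : ℤ) * (padicNorm p (b:ℚ)) ^ 2 * padicNorm p ((a:ℚ) - (b:ℚ))) * 1 := by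
            refine mul_le_mul_of_nonneg_left ?_ hRHS0
            calc r^2 * r ≤ 1^2 * 1 := by
                  refine mul_le_mul (by nlinarith) hr1 hr0 (by norm_num)
              _ = 1 := by norm_num
        _ = (p : ℚ) ^ (-3 : ℤ) * (padicNorm p (b:ℚ)) ^ 2 * padicNorm p ((a:ℚ) - (b:ℚ)) :=
            mul_one _
    have hsplit : (((a * p ^ (t+1) - 1).choose (b * p ^ (t+1) - 1) : ℚ)
        - ((a - 1).choose (b - 1) : ℚ))
        = (((a * p ^ (t+1) - 1).choose (b * p ^ (t+1) - 1) : ℚ)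
            - ((a * p ^ t - 1).choose (b * p ^ t - 1) : ℚ))
          + (((a * p ^ t - 1).choose (b * p ^ t - 1) : ℚ) - ((a - 1).choose (b - 1) : ℚ)) := by
      ring
    rw [hsplit]
    exact le_trans padicNorm.nonarchimedean (max_le hXb ih)
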